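/- Every graph of the form C(T) for a Burling tree (T, r, l, c) is strongly chordal; in particular, every induced subgraph of C(T) contains a simple vertex (a vertex v such that the closed neighborhoods of vertices in N[v] are totally ordered by inclusion). -/

import Mathlib

/-- A Burling tree: a finite rooted tree (encoded by a parent function) together with a
last-born function `lastBorn` choosing a child of every non-leaf, and a choose function
`choose` associating to every non-last-born non-root vertex `v` the vertex set of a
(possibly empty) branch (descending path) starting at the last-born of the parent of
`v`, and `∅` to the root and to last-born vertices. -/
structure BurlingTree (V : Type*) where
  root : V
  parent : V → V
  parent_root : parent root = root
  parent_eq_self : ∀ v : V, parent v = v → v = root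
  reaches_root : ∀ v : V, ∃ m : ℕ, parent^[m] v = root
  lastBorn : V → V
  lastBorn_spec : ∀ x : V, (∃ u : V, u ≠ x ∧ parent u = x) →
    lastBorn x ≠ x ∧ parent (lastBorn x) = x
  choose : V → Set V
  choose_empty : ∀ v : V, (v = root ∨ v = lastBorn (parent v)) → choose v = ∅
  choose_branch : ∀ v : V, v ≠ root → v ≠ lastBorn (parent v) →
    ∃ L : List V, (L = [] ∨ L.head? = some (lastBorn (parent v))) ∧
      List.Chain' (fun a b => parent b = a) L ∧ choose v = {w | w ∈ L}

namespace BurlingTree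

variable {V : Type*} (T : BurlingTree V)

/-- `u` is an ancestor of `v`: `u` lies on the path from `v` to the root. -/
def Ancestor (u v : V) : Prop := ∃ m : ℕ, T.parent^[m] v = u

/-- `C(T)`: the graph obtained from the fully derived graph `G(T)` of a Burling tree by
making the vertex set of every principal branch (root-to-leaf path) a clique: distinct
`u, v` are adjacent iff one is chosen by the other or one is an ancestor of the other. -/
def CT : SimpleGraph V :=
  SimpleGraph.fromRel (fun u v =>
    v ∈ T.choose u ∨ u ∈ T.choose v ∨ T.Ancestor u v ∨ T.Ancestor v u)

/-- The closed neighborhood of `x` inside the induced subgraph of `C(T)` on `S`. -/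
def closedNbhdIn (S : Set V) (x : V) : Set V :=
  {w ∈ S | w = x ∨ (T.CT).Adj x w}

end BurlingTree

namespace BurlingTree

attribute [local instance] Classical.propDecidable

variable {V : Type*} (T : BurlingTree V)

lemma iterate_root (m : ℕ) : T.parent^[m] T.root = T.root :=
  Function.iterate_fixed T.parent_root m

noncomputable def dpt (v : V) : ℕ := Nat.find (T.reaches_root v)

lemma dpt_spec (v : V) : T.parent^[T.dpt v] v = T.root := Nat.find_spec (T.reaches_root v)

lemma dpt_root : T.dpt T.root = 0 :=
  Nat.le_zero.mp (Nat.find_min' _ (by simp))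

lemma eq_root_of_dpt {v : V} (h : T.dpt v = 0) : v = T.root := by
  have h2 := T.dpt_spec v
  rw [h] at h2
  simpa using h2

lemma dpt_ne_zero {v : V} (h : v ≠ T.root) : T.dpt v ≠ 0 :=
  fun h0 => h (T.eq_root_of_dpt h0)

lemma dpt_parent {v : V} (h : v ≠ T.root) : T.dpt v = T.dpt (T.parent v) + 1 := by
  have hd : T.dpt v ≠ 0 := T.dpt_ne_zero h
  have h1 : T.parent^[T.dpt v - 1] (T.parent v) = T.root := by
    rw [← Function.iterate_succ_apply, Nat.succ_eq_add_one,
      Nat.sub_add_cancel (Nat.one_le_iff_ne_zero.mpr hd)]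
    exact T.dpt_spec v
  have hle : T.dpt (T.parent v) ≤ T.dpt v - 1 := Nat.find_min' _ h1
  have h2 : T.parent^[T.dpt (T.parent v) + 1] v = T.root := by
    rw [Function.iterate_succ_apply]
    exact T.dpt_spec (T.parent v)
  have hge : T.dpt v ≤ T.dpt (T.parent v) + 1 := Nat.find_min' _ h2
  omega

lemma dpt_iterate : ∀ (m : ℕ) {v : V}, m ≤ T.dpt v →
    T.dpt (T.parent^[m] v) = T.dpt v - m
  | 0, v, _ => by simp
  | (m+1), v, h => by
    have hv : v ≠ T.root := by
      intro hv; rw [hv, T.dpt_root] at h; omega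
    have hp := T.dpt_parent hv
    rw [Function.iterate_succ_apply, dpt_iterate m (by omega)]
    omega

lemma iterate_of_ge {m : ℕ} {v : V} (h : T.dpt v ≤ m) : T.parent^[m] v = T.root := by
  have hm : m = (m - T.dpt v) + T.dpt v := by omega
  rw [hm, Function.iterate_add_apply, T.dpt_spec, T.iterate_root]

lemma anc_refl (v : V) : T.Ancestor v v := ⟨0, rfl⟩

lemma anc_trans {u v w : V} (h1 : T.Ancestor u v) (h2 : T.Ancestor w u) :
    T.Ancestor w v := by
  obtain ⟨m, hm⟩ := h1; obtain ⟨k, hk⟩ := h2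
  exact ⟨k + m, by rw [Function.iterate_add_apply, hm, hk]⟩

lemma anc_parent (v : V) : T.Ancestor (T.parent v) v := ⟨1, by simp⟩

lemma anc_dpt_le {u v : V} (h : T.Ancestor u v) : T.dpt u ≤ T.dpt v := by
  obtain ⟨m, hm⟩ := h
  by_cases hle : m ≤ T.dpt v
  · rw [← hm, T.dpt_iterate m hle]; omega
  · rw [← hm, T.iterate_of_ge (by omega), T.dpt_root]; omega

lemma anc_iterate {u v : V} (h : T.Ancestor u v) :
    T.parent^[T.dpt v - T.dpt u] v = u := by
  obtain ⟨m, hm⟩ := h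
  by_cases hle : m ≤ T.dpt v
  · have hd : T.dpt u = T.dpt v - m := by rw [← hm, T.dpt_iterate m hle]
    have he : T.dpt v - T.dpt u = m := by omega
    rw [he, hm]
  · have hu : u = T.root := by rw [← hm, T.iterate_of_ge (by omega)]
    rw [hu, T.dpt_root]
    simpa using T.dpt_spec v

lemma anc_eq_of_dpt {u v : V} (h : T.Ancestor u v) (hd : T.dpt u = T.dpt v) :
    u = v := by
  have h2 := T.anc_iterate h
  rw [hd, Nat.sub_self] at h2
  simpa using h2.symm

lemma anc_dpt_lt {u v : V} (h : T.Ancestor u v) (hne : u ≠ v) : T.dpt u < T.dpt v :=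
  lt_of_le_of_ne (T.anc_dpt_le h) (fun he => hne (T.anc_eq_of_dpt h he))

lemma anc_antisymm {u v : V} (h1 : T.Ancestor u v) (h2 : T.Ancestor v u) : u = v :=
  T.anc_eq_of_dpt h1 (le_antisymm (T.anc_dpt_le h1) (T.anc_dpt_le h2))

lemma anc_comparable {u v w : V} (h1 : T.Ancestor u w) (h2 : T.Ancestor v w) :
    T.Ancestor u v ∨ T.Ancestor v u := by
  have key : ∀ a b : V, T.dpt a ≤ T.dpt b → T.Ancestor a w → T.Ancestor b w →
      T.Ancestor a b := by
    intro a b hab ha hb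
    have hia := T.anc_iterate ha
    have hib := T.anc_iterate hb
    have hbw : T.dpt b ≤ T.dpt w := T.anc_dpt_le hb
    refine ⟨T.dpt b - T.dpt a, ?_⟩
    have he : T.dpt b - T.dpt a + (T.dpt w - T.dpt b) = T.dpt w - T.dpt a := by omega
    have key2 : T.parent^[T.dpt b - T.dpt a] (T.parent^[T.dpt w - T.dpt b] w) = a := by
      rw [← Function.iterate_add_apply, he, hia]
    rw [hib] at key2
    exact key2
  rcases le_total (T.dpt u) (T.dpt v) with h | h
  · exact Or.inl (key u v h h1 h2)
  · exact Or.inr (key v u h h2 h1)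

lemma anc_parent_of_strict {u v : V} (h : T.Ancestor u v) (hne : u ≠ v) :
    T.Ancestor u (T.parent v) := by
  obtain ⟨m, hm⟩ := h
  rcases m with _ | m
  · exact absurd hm hne.symm
  · exact ⟨m, by rw [← Function.iterate_succ_apply]; exact hm⟩

lemma lb_spec {v : V} (h : v ≠ T.root) :
    T.lastBorn (T.parent v) ≠ T.parent v ∧
      T.parent (T.lastBorn (T.parent v)) = T.parent v :=
  T.lastBorn_spec (T.parent v) ⟨v, fun hv => h (T.parent_eq_self v hv.symm), rfl⟩

lemma lb_ne_root {v : V} (h : v ≠ T.root) : T.lastBorn (T.parent v) ≠ T.root := by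
  intro hb
  obtain ⟨h1, h2⟩ := T.lb_spec h
  rw [hb, T.parent_root] at h2
  rw [hb, ← h2] at h1
  exact h1 rfl

lemma lb_dpt {v : V} (h : v ≠ T.root) : T.dpt (T.lastBorn (T.parent v)) = T.dpt v := by
  obtain ⟨h1, h2⟩ := T.lb_spec h
  rw [T.dpt_parent (T.lb_ne_root h), h2, ← T.dpt_parent h]

lemma mem_choose_ne {v w : V} (hw : w ∈ T.choose v) :
    v ≠ T.root ∧ v ≠ T.lastBorn (T.parent v) := by
  constructor
  · intro h
    rw [T.choose_empty v (Or.inl h)] at hw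
    exact hw
  · intro h
    rw [T.choose_empty v (Or.inr h)] at hw
    exact hw

lemma chain_head_anc : ∀ (tl : List V) (a : V),
    List.Chain' (fun x y => T.parent y = x) (a :: tl) →
    ∀ w ∈ a :: tl, T.Ancestor a w
  | [], a, _, w, hw => by
    simp only [List.mem_singleton] at hw
    subst hw; exact T.anc_refl _
  | (c :: tl'), a, hc, w, hw => by
    rw [List.Chain', List.isChain_cons_cons] at hc
    obtain ⟨hac, hc'⟩ := hc
    rcases List.mem_cons.mp hw with rfl | hw'
    · exact T.anc_refl _
    · have hcw := chain_head_anc tl' c hc' w hw'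
      exact T.anc_trans hcw ⟨1, by simpa using hac⟩

lemma chain_between : ∀ (tl : List V) (a : V),
    List.Chain' (fun x y => T.parent y = x) (a :: tl) →
    ∀ w ∈ a :: tl, ∀ x, T.Ancestor a x → T.Ancestor x w → x ∈ a :: tl
  | [], a, _, w, hw, x, hax, hxw => by
    simp only [List.mem_singleton] at hw
    rw [hw] at hxw
    have hx : x = a := T.anc_antisymm hxw hax
    simp [hx]
  | (c :: tl'), a, hc, w, hw, x, hax, hxw => by
    rw [List.Chain', List.isChain_cons_cons] at hc
    obtain ⟨hac, hc'⟩ := hc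
    rcases List.mem_cons.mp hw with rfl | hw'
    · have hx : x = w := T.anc_antisymm hxw hax
      simp [hx]
    · have hcw : T.Ancestor c w := T.chain_head_anc tl' c hc' w hw'
      rcases T.anc_comparable hcw hxw with hcx | hxc
      · exact List.mem_cons_of_mem a (chain_between tl' c hc' w hw' x hcx hxw)
      · by_cases hxceq : x = c
        · exact List.mem_cons_of_mem a (by rw [hxceq]; exact List.mem_cons_self)
        · have h1 : T.Ancestor x (T.parent c) := T.anc_parent_of_strict hxc hxceq
          have h2 : T.Ancestor x a := by rw [← hac]; exact h1
          have hx : x = a := T.anc_antisymm h2 hax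
          simp [hx]

lemma chain_comp : ∀ (L : List V),
    List.Chain' (fun x y => T.parent y = x) L →
    ∀ x ∈ L, ∀ y ∈ L, T.Ancestor x y ∨ T.Ancestor y x
  | [], _, x, hx, _, _ => by simp at hx
  | (a :: tl), hc, x, hx, y, hy => by
    rcases List.mem_cons.mp hx with rfl | hx'
    · exact Or.inl (T.chain_head_anc _ _ hc y hy)
    · rcases List.mem_cons.mp hy with rfl | hy'
      · exact Or.inr (T.chain_head_anc _ _ hc x hx)
      · exact chain_comp tl hc.tail x hx' y hy'

lemma choose_cases {v w : V} (hw : w ∈ T.choose v) :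
    T.Ancestor (T.lastBorn (T.parent v)) w ∧
    (∀ x, T.Ancestor (T.lastBorn (T.parent v)) x → T.Ancestor x w → x ∈ T.choose v) ∧
    (∀ y ∈ T.choose v, T.Ancestor w y ∨ T.Ancestor y w) := by
  obtain ⟨hroot, hlb⟩ := T.mem_choose_ne hw
  obtain ⟨L, hhead, hchain, heq⟩ := T.choose_branch v hroot hlb
  have hwL : w ∈ L := by rw [heq] at hw; exact hw
  cases L with
  | nil => simp at hwL
  | cons a tl =>
    have ha : a = T.lastBorn (T.parent v) := by
      rcases hhead with h | h
      · simp at h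
      · simpa using h
    subst ha
    refine ⟨T.chain_head_anc _ _ hchain w hwL, ?_, ?_⟩
    · intro x hbx hxw
      rw [heq]
      exact T.chain_between _ _ hchain w hwL x hbx hxw
    · intro y hy
      rw [heq] at hy
      exact T.chain_comp _ hchain w hwL y hy

lemma not_mem_choose_self (v : V) : v ∉ T.choose v := by
  intro hv
  obtain ⟨hroot, hlb⟩ := T.mem_choose_ne hv
  have hb := (T.choose_cases hv).1
  have hd := T.lb_dpt hroot
  exact hlb (T.anc_eq_of_dpt hb hd).symm

noncomputable def mu (v : V) : ℕ :=
  2 * T.dpt v + (if v = T.lastBorn (T.parent v) then 1 else 0)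

lemma mu_lt_of_mem_choose {u w : V} (hw : w ∈ T.choose u) : T.mu u < T.mu w := by
  obtain ⟨hroot, hlb⟩ := T.mem_choose_ne hw
  have hb : T.Ancestor (T.lastBorn (T.parent u)) w := (T.choose_cases hw).1
  have hdb : T.dpt (T.lastBorn (T.parent u)) = T.dpt u := T.lb_dpt hroot
  have hle : T.dpt u ≤ T.dpt w := by
    have := T.anc_dpt_le hb; omega
  unfold mu
  rcases eq_or_lt_of_le hle with he | hlt
  · have hbw : T.lastBorn (T.parent u) = w := T.anc_eq_of_dpt hb (by omega)
    have hpw : T.parent w = T.parent u := by rw [← hbw]; exact (T.lb_spec hroot).2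
    have hwlb : w = T.lastBorn (T.parent w) := by rw [hpw, hbw]
    rw [if_neg hlb, if_pos hwlb]
    omega
  · split_ifs <;> omega

lemma mu_lt_of_strict {v d : V} (h : T.Ancestor v d) (hne : v ≠ d) :
    T.mu v < T.mu d := by
  have := T.anc_dpt_lt h hne
  unfold mu
  split_ifs <;> omega

lemma adj_iff {u w : V} : T.CT.Adj u w ↔ u ≠ w ∧
    (w ∈ T.choose u ∨ u ∈ T.choose w ∨ T.Ancestor u w ∨ T.Ancestor w u) := by
  unfold CT
  rw [SimpleGraph.fromRel_adj]
  tauto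

lemma mem_cn {S : Set V} {x w : V} :
    w ∈ T.closedNbhdIn S x ↔ w ∈ S ∧ (w = x ∨ T.CT.Adj x w) := Iff.rfl

lemma cn_anti {S : Set V} {x y : V} (hxy : T.Ancestor x y) (hne : x ≠ y) :
    T.closedNbhdIn S y ⊆ T.closedNbhdIn S x := by
  intro w hw
  rw [T.mem_cn] at hw ⊢
  obtain ⟨hwS, hw2⟩ := hw
  refine ⟨hwS, ?_⟩
  rcases hw2 with rfl | hadj
  · right
    rw [T.adj_iff]
    exact ⟨hne, Or.inr (Or.inr (Or.inl hxy))⟩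
  · rw [T.adj_iff] at hadj
    obtain ⟨hne2, hrel⟩ := hadj
    by_cases hxw : x = w
    · exact Or.inl hxw.symm
    right; rw [T.adj_iff]; refine ⟨hxw, ?_⟩
    rcases hrel with h | h | h | h
    · -- w ∈ choose y
      have hyroot : y ≠ T.root := (T.mem_choose_ne h).1
      have hxp : T.Ancestor x (T.parent y) := T.anc_parent_of_strict hxy hne
      have hbw := (T.choose_cases h).1
      have hpb : T.parent (T.lastBorn (T.parent y)) = T.parent y := (T.lb_spec hyroot).2
      have hxb : T.Ancestor x (T.lastBorn (T.parent y)) :=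
        T.anc_trans (T.anc_parent _) (by rw [hpb]; exact hxp)
      exact Or.inr (Or.inr (Or.inl (T.anc_trans hbw hxb)))
    · -- y ∈ choose w
      have hwroot : w ≠ T.root := (T.mem_choose_ne h).1
      have hby : T.Ancestor (T.lastBorn (T.parent w)) y := (T.choose_cases h).1
      rcases T.anc_comparable hby hxy with hbx | hxb
      · exact Or.inr (Or.inl ((T.choose_cases h).2.1 x hbx hxy))
      · by_cases hxbeq : x = T.lastBorn (T.parent w)
        · refine Or.inr (Or.inl ((T.choose_cases h).2.1 x ?_ hxy))
          rw [hxbeq]; exact T.anc_refl _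
        · have h1 : T.Ancestor x (T.parent (T.lastBorn (T.parent w))) :=
            T.anc_parent_of_strict hxb hxbeq
          have hpb : T.parent (T.lastBorn (T.parent w)) = T.parent w :=
            (T.lb_spec hwroot).2
          have hxw2 : T.Ancestor x w :=
            T.anc_trans (T.anc_parent w) (by rw [← hpb]; exact h1)
          exact Or.inr (Or.inr (Or.inl hxw2))
    · -- Ancestor y w
      exact Or.inr (Or.inr (Or.inl (T.anc_trans h hxy)))
    · -- Ancestor w y
      rcases T.anc_comparable h hxy with hwx | hxw2
      · exact Or.inr (Or.inr (Or.inr hwx))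
      · exact Or.inr (Or.inr (Or.inl hxw2))

lemma cn_char {S : Set V} {v z : V}
    (hnc : ∀ u ∈ S, v ∉ T.choose u) (hnd : ∀ d ∈ S, T.Ancestor v d → d = v)
    (hz : z ∈ T.closedNbhdIn S v) :
    z = v ∨ (T.Ancestor z v ∧ z ≠ v) ∨ z ∈ T.choose v := by
  rw [T.mem_cn] at hz
  obtain ⟨hzS, hz2⟩ := hz
  rcases hz2 with h | hadj
  · exact Or.inl h
  · rw [T.adj_iff] at hadj
    obtain ⟨hnevz, hrel⟩ := hadj
    rcases hrel with h | h | h | h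
    · exact Or.inr (Or.inr h)
    · exact absurd h (hnc z hzS)
    · exact absurd (hnd z hzS h).symm hnevz
    · exact Or.inr (Or.inl ⟨h, fun he => hnevz he.symm⟩)

lemma cn_subset_choose {S : Set V} {v w : V}
    (hnc : ∀ u ∈ S, v ∉ T.choose u) (hnd : ∀ d ∈ S, T.Ancestor v d → d = v)
    (hw : w ∈ T.choose v) :
    T.closedNbhdIn S v ⊆ T.closedNbhdIn S w := by
  have hvroot : v ≠ T.root := (T.mem_choose_ne hw).1
  have hvnw : v ≠ w := by
    intro h; subst h; exact T.not_mem_choose_self v hw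
  have hbw : T.Ancestor (T.lastBorn (T.parent v)) w := (T.choose_cases hw).1
  intro z hz
  have hchar := T.cn_char hnc hnd hz
  rw [T.mem_cn] at hz ⊢
  obtain ⟨hzS, _⟩ := hz
  refine ⟨hzS, ?_⟩
  rcases hchar with rfl | ⟨hzv, hzne⟩ | hzc
  · right; rw [T.adj_iff]
    exact ⟨hvnw.symm, Or.inr (Or.inl hw)⟩
  · -- z strict ancestor of v
    have h1 : T.Ancestor z (T.parent v) := T.anc_parent_of_strict hzv hzne
    have hpb : T.parent (T.lastBorn (T.parent v)) = T.parent v := (T.lb_spec hvroot).2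
    have hzb : T.Ancestor z (T.lastBorn (T.parent v)) :=
      T.anc_trans (T.anc_parent _) (by rw [hpb]; exact h1)
    have hzw : T.Ancestor z w := T.anc_trans hbw hzb
    have hznew : z ≠ w := by
      intro h
      have d1 : T.dpt z < T.dpt v := T.anc_dpt_lt hzv hzne
      have d2 : T.dpt (T.lastBorn (T.parent v)) = T.dpt v := T.lb_dpt hvroot
      have d3 : T.dpt (T.lastBorn (T.parent v)) ≤ T.dpt w := T.anc_dpt_le hbw
      subst h
      omega
    right; rw [T.adj_iff]
    exact ⟨hznew.symm, Or.inr (Or.inr (Or.inr hzw))⟩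
  · -- z ∈ choose v
    rcases (T.choose_cases hw).2.2 z hzc with hwz | hzw
    · by_cases he : w = z
      · exact Or.inl he.symm
      · right; rw [T.adj_iff]; exact ⟨he, Or.inr (Or.inr (Or.inl hwz))⟩
    · by_cases he : w = z
      · exact Or.inl he.symm
      · right; rw [T.adj_iff]; exact ⟨he, Or.inr (Or.inr (Or.inr hzw))⟩

lemma simple_of_H {S : Set V} {v : V}
    (hnc : ∀ u ∈ S, v ∉ T.choose u) (hnd : ∀ d ∈ S, T.Ancestor v d → d = v) :
    ∀ x ∈ T.closedNbhdIn S v, ∀ y ∈ T.closedNbhdIn S v,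
      T.closedNbhdIn S x ⊆ T.closedNbhdIn S y ∨
        T.closedNbhdIn S y ⊆ T.closedNbhdIn S x := by
  have hcomp : ∀ a, a ∈ T.closedNbhdIn S v → a ≠ v →
      T.closedNbhdIn S v ⊆ T.closedNbhdIn S a := by
    intro a ha hane
    rcases T.cn_char hnc hnd ha with h | ⟨h1, h2⟩ | h
    · exact absurd h hane
    · exact T.cn_anti h1 h2
    · exact T.cn_subset_choose hnc hnd h
  have hanc : ∀ a b, a ∈ T.closedNbhdIn S v → b ∈ T.closedNbhdIn S v →
      a ≠ v → b ≠ v → T.Ancestor a b ∨ T.Ancestor b a := by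
    intro a b ha hb hane hbne
    have haux : ∀ c, c ∈ T.closedNbhdIn S v → c ≠ v → T.Ancestor c v ∧ c ≠ v ∨
        c ∈ T.choose v := by
      intro c hc hcne
      rcases T.cn_char hnc hnd hc with h | h | h
      · exact absurd h hcne
      · exact Or.inl h
      · exact Or.inr h
    have key : ∀ c d : V, (T.Ancestor c v ∧ c ≠ v) → d ∈ T.choose v →
        T.Ancestor c d := by
      intro c d ⟨hc1, hc2⟩ hd
      have hvroot : v ≠ T.root := (T.mem_choose_ne hd).1
      have h1 : T.Ancestor c (T.parent v) := T.anc_parent_of_strict hc1 hc2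
      have hpb : T.parent (T.lastBorn (T.parent v)) = T.parent v := (T.lb_spec hvroot).2
      have hcb : T.Ancestor c (T.lastBorn (T.parent v)) :=
        T.anc_trans (T.anc_parent _) (by rw [hpb]; exact h1)
      exact T.anc_trans ((T.choose_cases hd).1) hcb
    rcases haux a ha hane with ha' | ha' <;> rcases haux b hb hbne with hb' | hb'
    · exact T.anc_comparable ha'.1 hb'.1
    · exact Or.inl (key a b ha' hb')
    · exact Or.inr (key b a hb' ha')
    · exact (T.choose_cases ha').2.2 b hb'
  intro x hx y hy
  by_cases hxv : x = v
  · by_cases hyv : y = v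
    · subst hxv; subst hyv; left; exact subset_rfl
    · subst hxv; left; exact hcomp y hy hyv
  · by_cases hyv : y = v
    · subst hyv; right; exact hcomp x hx hxv
    · rcases hanc x y hx hy hxv hyv with h | h
      · by_cases hxy : x = y
        · subst hxy; left; exact subset_rfl
        · right; exact T.cn_anti h hxy
      · by_cases hxy : x = y
        · subst hxy; left; exact subset_rfl
        · left; exact T.cn_anti h (Ne.symm hxy)

end BurlingTree

/-- Every graph `C(T)` of a Burling tree is strongly chordal: by Farber's
characterization, every (nonempty) induced subgraph `C(T)[S]` contains a simple vertex,
i.e. a vertex `v` such that the closed neighborhoods (within `S`) of the vertices of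
`N_S[v]` are totally ordered by inclusion. -/
theorem burling_CT_strongly_chordal {V : Type*} [Fintype V] (T : BurlingTree V)
    (S : Set V) (hS : S.Nonempty) :
    ∃ v ∈ S, ∀ x ∈ T.closedNbhdIn S v, ∀ y ∈ T.closedNbhdIn S v,
      T.closedNbhdIn S x ⊆ T.closedNbhdIn S y ∨ T.closedNbhdIn S y ⊆ T.closedNbhdIn S x := by
  classical
  have hfin : S.Finite := Set.toFinite S
  set F : Finset V := hfin.toFinset with hF
  have hmemF : ∀ a : V, a ∈ F ↔ a ∈ S := fun a => Set.Finite.mem_toFinset hfin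
  have hFne : F.Nonempty := by
    obtain ⟨a, ha⟩ := hS
    exact ⟨a, (hmemF a).mpr ha⟩
  obtain ⟨v0, hv0F, hv0min⟩ := F.exists_min_image T.mu hFne
  set A : Finset V := F.filter (fun a => ∀ u ∈ S, a ∉ T.choose u) with hA
  have hv0A : v0 ∈ A := by
    rw [hA, Finset.mem_filter]
    refine ⟨hv0F, fun u hu hmem => ?_⟩
    have h1 : T.mu u < T.mu v0 := T.mu_lt_of_mem_choose hmem
    have h2 : T.mu v0 ≤ T.mu u := hv0min u ((hmemF u).mpr hu)
    omega
  obtain ⟨v, hvA, hvmax⟩ := A.exists_max_image T.mu ⟨v0, hv0A⟩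
  rw [hA, Finset.mem_filter] at hvA
  obtain ⟨hvF, hvnc⟩ := hvA
  have hvS : v ∈ S := (hmemF v).mp hvF
  have hnd : ∀ d ∈ S, T.Ancestor v d → d = v := by
    by_contra hcon
    push_neg at hcon
    obtain ⟨d0, hd0S, hd0anc, hd0ne⟩ := hcon
    set D : Finset V := F.filter (fun a => T.Ancestor v a ∧ a ≠ v) with hD
    have hd0D : d0 ∈ D := by
      rw [hD, Finset.mem_filter]
      exact ⟨(hmemF d0).mpr hd0S, hd0anc, hd0ne⟩
    obtain ⟨d, hdD, hdmin⟩ := D.exists_min_image T.mu ⟨d0, hd0D⟩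
    rw [hD, Finset.mem_filter] at hdD
    obtain ⟨hdF, hdanc, hdne⟩ := hdD
    have hdS : d ∈ S := (hmemF d).mp hdF
    have hmuvd : T.mu v < T.mu d := T.mu_lt_of_strict hdanc (Ne.symm hdne)
    have hdnA : ∃ u ∈ S, d ∈ T.choose u := by
      by_contra hno
      push_neg at hno
      have hdA : d ∈ A := by
        rw [hA, Finset.mem_filter]; exact ⟨hdF, hno⟩
      have := hvmax d hdA
      omega
    obtain ⟨u, huS, hdu⟩ := hdnA
    have huroot : u ≠ T.root := (T.mem_choose_ne hdu).1
    have hbd : T.Ancestor (T.lastBorn (T.parent u)) d := (T.choose_cases hdu).1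
    rcases T.anc_comparable hbd hdanc with hbv | hvb
    · exact hvnc u huS ((T.choose_cases hdu).2.1 v hbv hdanc)
    · by_cases hveqb : v = T.lastBorn (T.parent u)
      · refine hvnc u huS ((T.choose_cases hdu).2.1 v ?_ hdanc)
        rw [hveqb]; exact T.anc_refl _
      · have h1 : T.Ancestor v (T.parent (T.lastBorn (T.parent u))) :=
          T.anc_parent_of_strict hvb hveqb
        have hpb : T.parent (T.lastBorn (T.parent u)) = T.parent u :=
          (T.lb_spec huroot).2
        have hvu : T.Ancestor v u :=
          T.anc_trans (T.anc_parent u) (by rw [← hpb]; exact h1)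
        by_cases hueqv : u = v
        · have hdb : T.dpt (T.lastBorn (T.parent u)) = T.dpt u := T.lb_dpt huroot
          have hlt : T.dpt v < T.dpt (T.lastBorn (T.parent u)) :=
            T.anc_dpt_lt hvb hveqb
          have hdeq : T.dpt u = T.dpt v := by rw [hueqv]
          omega
        · have huD : u ∈ D := by
            rw [hD, Finset.mem_filter]
            exact ⟨(hmemF u).mpr huS, hvu, hueqv⟩
          have hmin := hdmin u huD
          have := T.mu_lt_of_mem_choose hdu
          omega
  exact ⟨v, hvS, T.simple_of_H hvnc hnd⟩
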